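/- arXiv:1912.04096 — 4 statements merged into one kernel-verified Lean document; each statement's English description precedes it below -/
import Mathlib

section
/- Let X ⊆ ℝⁿ be a nonempty set, U : ℝⁿ → ℝ a function, c ∈ ℝⁿ a vector, and V > 0 a real number. Suppose x* ∈ X maximizes U over X and x^V ∈ X maximizes the perturbed objective x ↦ V·U(x) − ⟨c, x⟩ over X. Then 0 ≤ U(x*) − U(x^V) ≤ ⟨c, x* − x^V⟩/V ≤ ‖c‖·‖x* − x^V‖/V. -/
/-- Utility gap of the perturbed NUM optimizer: if `x*` maximizes `U` over `X` and
`x^V` maximizes `V·U(x) − ⟪c, x⟫` over `X`, then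
`0 ≤ U(x*) − U(x^V) ≤ ⟪c, x* − x^V⟫/V ≤ ‖c‖·‖x* − x^V‖/V`. -/
theorem stmt_3 (n : ℕ) (X : Set (EuclideanSpace ℝ (Fin n))) (hX : X.Nonempty)
    (U : EuclideanSpace ℝ (Fin n) → ℝ) (c : EuclideanSpace ℝ (Fin n))
    (V : ℝ) (hV : 0 < V)
    (xstar xV : EuclideanSpace ℝ (Fin n))
    (hxstar : xstar ∈ X) (hxV : xV ∈ X)
    (hmax : ∀ x ∈ X, U x ≤ U xstar)
    (hmaxV : ∀ x ∈ X, V * U x - (inner ℝ c x : ℝ) ≤ V * U xV - (inner ℝ c xV : ℝ)) :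
    0 ≤ U xstar - U xV ∧
    U xstar - U xV ≤ (inner ℝ c (xstar - xV) : ℝ) / V ∧
    (inner ℝ c (xstar - xV) : ℝ) / V ≤ ‖c‖ * ‖xstar - xV‖ / V := by
  have h1 := hmax xV hxV
  have h2 := hmaxV xstar hxstar
  have hsub : (inner ℝ c (xstar - xV) : ℝ) = inner ℝ c xstar - inner ℝ c xV :=
    inner_sub_right c xstar xV
  refine ⟨by linarith, ?_, ?_⟩
  · rw [hsub, le_div_iff₀ hV]
    nlinarith
  · gcongr
    exact real_inner_le_norm c (xstar - xV)
end

section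
/- Let X ⊆ ℝⁿ be a nonempty compact convex set, U : ℝⁿ → ℝ a continuous function that is strictly concave on X, and c ∈ ℝⁿ a fixed vector. Let x* be the (unique) maximizer of U over X, and for each V > 0 let x^V be any maximizer of x ↦ V·U(x) − ⟨c, x⟩ over X. Then x^V converges to x* as V → ∞; that is, for every ε > 0 there exists V₀ such that for all V ≥ V₀, ‖x^V − x*‖ < ε. -/
/-- Convergence of the perturbed NUM maximizers: on a nonempty compact convex `X`,
with `U` continuous and strictly concave on `X`, the maximizers `x^V` of
`V·U(x) − ⟪c, x⟫` converge to the maximizer `x*` of `U` as `V → ∞`. -/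
theorem stmt_4 (n : ℕ) (X : Set (EuclideanSpace ℝ (Fin n))) (hX : X.Nonempty)
    (hXcomp : IsCompact X) (hXconv : Convex ℝ X)
    (U : EuclideanSpace ℝ (Fin n) → ℝ) (hUcont : Continuous U)
    (hUconc : StrictConcaveOn ℝ X U)
    (c : EuclideanSpace ℝ (Fin n))
    (xstar : EuclideanSpace ℝ (Fin n)) (hxstar : xstar ∈ X)
    (hmax : ∀ x ∈ X, U x ≤ U xstar)
    (xV : ℝ → EuclideanSpace ℝ (Fin n))
    (hxVmem : ∀ V : ℝ, 0 < V → xV V ∈ X)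
    (hxVmax : ∀ V : ℝ, 0 < V → ∀ x ∈ X,
      V * U x - (inner ℝ c x : ℝ) ≤ V * U (xV V) - (inner ℝ c (xV V) : ℝ)) :
    ∀ ε > 0, ∃ V₀ : ℝ, 0 < V₀ ∧ ∀ V : ℝ, V₀ ≤ V → ‖xV V - xstar‖ < ε := by
  -- uniqueness of maximizer
  have huniq : ∀ x ∈ X, x ≠ xstar → U x < U xstar := by
    intro x hx hne
    by_contra h
    push_neg at h
    have hEq : U x = U xstar := le_antisymm (hmax x hx) h
    have hmid := hUconc.2 hx hxstar hne (by norm_num : (0:ℝ) < 1/2)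
      (by norm_num : (0:ℝ) < 1/2) (by norm_num)
    have hmem : (1/2 : ℝ) • x + (1/2 : ℝ) • xstar ∈ X :=
      hXconv hx hxstar (by norm_num) (by norm_num) (by norm_num)
    have := hmax _ hmem
    rw [hEq] at hmid
    simp only [smul_eq_mul] at hmid
    linarith
  intro ε hε
  -- the bad set
  set K := X ∩ {x | ε ≤ ‖x - xstar‖} with hK
  have hKcomp : IsCompact K := hXcomp.inter_right
    (isClosed_le continuous_const ((continuous_id.sub continuous_const).norm))
  by_cases hKne : K.Nonempty
  · obtain ⟨z, hzK, hzmax⟩ := hKcomp.exists_isMaxOn hKne (hUcont.continuousOn)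
    have hzX : z ∈ X := hzK.1
    have hzne : z ≠ xstar := by
      intro h
      have := hzK.2
      rw [h] at this
      simp at this
      linarith
    have hδ : 0 < U xstar - U z := sub_pos.mpr (huniq z hzX hzne)
    -- bound inner products on X
    obtain ⟨M, hM⟩ : ∃ M : ℝ, ∀ x ∈ X, |(inner ℝ c x : ℝ)| ≤ M := by
      obtain ⟨w, hwX, hwmax⟩ := hXcomp.exists_isMaxOn hX
        (Continuous.continuousOn ((continuous_inner.comp (continuous_const.prodMk continuous_id) : Continuous fun x : EuclideanSpace ℝ (Fin n) => (inner ℝ c x : ℝ)).abs))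
      exact ⟨_, fun x hx => hwmax hx⟩
    refine ⟨max 1 ((2 * M + 1) / (U xstar - U z)), lt_of_lt_of_le one_pos (le_max_left _ _),
      fun V hV => ?_⟩
    have hV1 : (1:ℝ) ≤ V := le_trans (le_max_left _ _) hV
    have hVpos : 0 < V := lt_of_lt_of_le one_pos hV1
    by_contra hcon
    push_neg at hcon
    have hxVK : xV V ∈ K := ⟨hxVmem V hVpos, hcon⟩
    have h1 : U (xV V) ≤ U z := hzmax hxVK
    have h2 := hxVmax V hVpos xstar hxstar
    have h3 : V * (U xstar - U (xV V)) ≤ (inner ℝ c xstar : ℝ) - (inner ℝ c (xV V) : ℝ) := by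
      nlinarith
    have h4 : (inner ℝ c xstar : ℝ) - (inner ℝ c (xV V) : ℝ) ≤ 2 * M := by
      have := hM xstar hxstar
      have := hM (xV V) (hxVmem V hVpos)
      have h5 := abs_le.mp (hM xstar hxstar)
      have h6 := abs_le.mp (hM (xV V) (hxVmem V hVpos))
      linarith
    have hVge : (2 * M + 1) / (U xstar - U z) ≤ V := le_trans (le_max_right _ _) hV
    have h7 : 2 * M + 1 ≤ V * (U xstar - U z) := by
      rw [div_le_iff₀ hδ] at hVge
      linarith
    have h8 : V * (U xstar - U z) ≤ V * (U xstar - U (xV V)) := by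
      apply mul_le_mul_of_nonneg_left (by linarith) hVpos.le
    linarith
  · refine ⟨1, one_pos, fun V hV => ?_⟩
    have hVpos : 0 < V := lt_of_lt_of_le one_pos hV
    by_contra hcon
    push_neg at hcon
    exact hKne ⟨xV V, hxVmem V hVpos, hcon⟩
end

section
/- Let N be a finite set of nodes and A : N → Finset N a symmetric adjacency structure (m ∈ A(n) ↔ n ∈ A(m), n ∉ A(n), and A(n) nonempty for every n). Let b : N × N → {0,1} be binary link-activation variables supported on adjacent pairs (b(n,m) = 0 whenever m ∉ A(n)). Then b satisfies the linear constraints b(n,m) + (1/|A(n)|)·∑_{m' ∈ A(n)} b(m',n) ≤ 1 for all n ∈ N and all m ∈ A(n), if and only if there exists a state assignment s : N → {0,1} such that b(n,m) = 1 implies s(n) = 1 and s(m) = 0 (i.e., the set of active links forms a Directed Bipartite SubGraph, with every active link going from a node in transmit state to a node in receive state). -/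
/-- The linear MILP constraints `b(n,m) + (1/|A(n)|)·∑_{m'∈A(n)} b(m',n) ≤ 1` on binary
link-activation variables hold iff the active links form a Directed Bipartite SubGraph:
there is a transmit/receive state assignment `s` such that every active link goes from a
transmitting node to a receiving node. -/
theorem stmt_5 {N : Type*} [Fintype N] [DecidableEq N]
    (A : N → Finset N)
    (hsymm : ∀ n m, m ∈ A n ↔ n ∈ A m)
    (hirr : ∀ n, n ∉ A n)
    (hne : ∀ n, (A n).Nonempty)
    (b : N → N → ℝ)
    (hbin : ∀ n m, b n m = 0 ∨ b n m = 1)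
    (hsupp : ∀ n m, m ∉ A n → b n m = 0) :
    (∀ n : N, ∀ m ∈ A n,
        b n m + (1 / ((A n).card : ℝ)) * ∑ m' ∈ A n, b m' n ≤ 1) ↔
    (∃ s : N → Bool, ∀ n m, b n m = 1 → s n = true ∧ s m = false) := by
  classical
  constructor
  · intro hc
    refine ⟨fun n => if ∃ m, b n m = 1 then true else false, ?_⟩
    intro n m hbnm
    constructor
    · show (if ∃ k, b n k = 1 then true else false) = true
      rw [if_pos ⟨m, hbnm⟩]
    · show (if ∃ k, b m k = 1 then true else false) = false
      rw [if_neg]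
      rintro ⟨k, hk⟩
      have hmA : m ∈ A n := by
        by_contra h; rw [hsupp n m h] at hbnm; norm_num at hbnm
      have hkA : k ∈ A m := by
        by_contra h; rw [hsupp m k h] at hk; norm_num at hk
      have hnAm : n ∈ A m := (hsymm n m).1 hmA
      have hc' := hc m k hkA
      rw [hk] at hc'
      have hsum : (1:ℝ) ≤ ∑ m' ∈ A m, b m' m := by
        have := Finset.single_le_sum (f := fun m' => b m' m)
          (fun i _ => by rcases hbin i m with h|h <;> simp [h]) hnAm
        simpa [hbnm] using this
      have hcardpos : (0:ℝ) < (A m).card := by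
        exact_mod_cast Finset.card_pos.2 (hne m)
      have hpos : 0 < (1 / ((A m).card : ℝ)) * ∑ m' ∈ A m, b m' m :=
        mul_pos (by positivity) (lt_of_lt_of_le one_pos hsum)
      linarith
  · rintro ⟨s, hs⟩ n m hm
    have hcardpos : (0:ℝ) < (A n).card := by
      exact_mod_cast Finset.card_pos.2 (hne n)
    rcases hbin n m with h|h
    · rw [h, zero_add]
      have hsum_le : ∑ m' ∈ A n, b m' n ≤ (A n).card := by
        calc ∑ m' ∈ A n, b m' n ≤ ∑ _m' ∈ A n, (1:ℝ) :=
              Finset.sum_le_sum (fun i _ => by rcases hbin i n with h'|h' <;> simp [h'])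
          _ = (A n).card := by simp
      rw [one_div, inv_mul_le_iff₀ hcardpos, mul_one]
      exact hsum_le
    · have hsn := (hs n m h).1
      have hsum0 : ∑ m' ∈ A n, b m' n = 0 := Finset.sum_eq_zero (fun i _ => by
        rcases hbin i n with h'|h'
        · exact h'
        · have := (hs i n h').2
          rw [hsn] at this
          exact absurd this (by simp))
      rw [h, hsum0, mul_zero]
      norm_num
end

section
/- Let N be a finite set of nodes and A : N → Finset N a symmetric adjacency structure (m ∈ A(n) ↔ n ∈ A(m), n ∉ A(n), and A(n) nonempty for every n), and let w : N × N → ℝ be nonnegative link weights supported on adjacent pairs. Then the maximum of ∑_{n} ∑_{m ∈ A(n)} b(n,m)·w(n,m) over all binary b : N × N → {0,1} supported on adjacent pairs and satisfying b(n,m) + (1/|A(n)|)·∑_{m' ∈ A(n)} b(m',n) ≤ 1 for all n and all m ∈ A(n), equals the maximum over all state assignments s : N → {0,1} of ∑_{(n,m) : m ∈ A(n), s(n)=1, s(m)=0} w(n,m). -/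
open scoped Classical

/-- The optimal value of the MILP (maximizing total active-link weight over binary
variables satisfying the linear half-duplex constraints) equals the optimal value of the
Maximum Weighted Directed Bipartite SubGraph problem (maximizing over transmit/receive
state assignments `s`). -/
theorem stmt_7 {N : Type*} [Fintype N] [DecidableEq N]
    (A : N → Finset N)
    (hsymm : ∀ n m, m ∈ A n ↔ n ∈ A m)
    (hirr : ∀ n, n ∉ A n)
    (hne : ∀ n, (A n).Nonempty)
    (w : N → N → ℝ)
    (hw : ∀ n m, 0 ≤ w n m)
    (hwsupp : ∀ n m, m ∉ A n → w n m = 0) :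
    ∃ v : ℝ,
      IsGreatest {v : ℝ | ∃ b : N → N → ℝ,
          (∀ n m, b n m = 0 ∨ b n m = 1) ∧
          (∀ n m, m ∉ A n → b n m = 0) ∧
          (∀ n : N, ∀ m ∈ A n,
            b n m + (1 / ((A n).card : ℝ)) * ∑ m' ∈ A n, b m' n ≤ 1) ∧
          v = ∑ n : N, ∑ m ∈ A n, b n m * w n m} v ∧
      IsGreatest {v : ℝ | ∃ s : N → Bool,
          v = ∑ n : N, ∑ m ∈ (A n).filter (fun m => s n = true ∧ s m = false),
            w n m} v := by
  classical
  set f : (N → Bool) → ℝ :=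
    fun s => ∑ n : N, ∑ m ∈ (A n).filter (fun m => s n = true ∧ s m = false), w n m with hf
  obtain ⟨s₀, hs₀⟩ := Finite.exists_max f
  have hcardpos : ∀ n : N, 0 < ((A n).card : ℝ) := by
    intro n
    exact_mod_cast Finset.card_pos.mpr (hne n)
  -- the canonical binary variables induced by a state s
  have hval : ∀ s : N → Bool,
      (∑ n : N, ∑ m ∈ A n,
        (if m ∈ A n ∧ s n = true ∧ s m = false then (1:ℝ) else 0) * w n m) = f s := by
    intro s
    refine Finset.sum_congr rfl fun n _ => ?_
    rw [Finset.sum_filter]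
    refine Finset.sum_congr rfl fun m hm => ?_
    by_cases h : s n = true ∧ s m = false
    · simp [hm, h]
    · simp [hm, h]
  -- feasibility of induced binary variables
  have hfeas : ∀ s : N → Bool, ∀ n : N, ∀ m ∈ A n,
      (if m ∈ A n ∧ s n = true ∧ s m = false then (1:ℝ) else 0)
        + (1 / ((A n).card : ℝ)) *
          ∑ m' ∈ A n, (if n ∈ A m' ∧ s m' = true ∧ s n = false then (1:ℝ) else 0) ≤ 1 := by
    intro s n m hm
    by_cases hsn : s n = true
    · have hsum : (∑ m' ∈ A n,
          (if n ∈ A m' ∧ s m' = true ∧ s n = false then (1:ℝ) else 0)) = 0 := by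
        refine Finset.sum_eq_zero fun m' _ => ?_
        simp [hsn]
      rw [hsum]
      split <;> norm_num
    · have hb0 : (if m ∈ A n ∧ s n = true ∧ s m = false then (1:ℝ) else 0) = 0 := by
        simp [hsn]
      rw [hb0, zero_add]
      have hsum : (∑ m' ∈ A n,
          (if n ∈ A m' ∧ s m' = true ∧ s n = false then (1:ℝ) else 0)) ≤ ((A n).card : ℝ) := by
        calc _ ≤ ∑ m' ∈ A n, (1:ℝ) := by
              refine Finset.sum_le_sum fun m' _ => ?_
              split <;> norm_num
          _ = ((A n).card : ℝ) := by simp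
      rw [one_div, inv_mul_le_iff₀ (hcardpos n)]
      linarith
  refine ⟨f s₀, ⟨?_, ?_⟩, ⟨s₀, rfl⟩, ?_⟩
  · -- f s₀ is attained by the MILP
    refine ⟨fun n m => if m ∈ A n ∧ s₀ n = true ∧ s₀ m = false then (1:ℝ) else 0,
      ?_, ?_, hfeas s₀, (hval s₀).symm⟩
    · intro n m; dsimp only; split <;> simp
    · intro n m h; simp [h]
  · -- every MILP-feasible value is ≤ f s₀
    rintro v ⟨b, hbin, hsupp, hcon, rfl⟩
    set s : N → Bool := fun n => decide (∃ m ∈ A n, b n m = 1) with hs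
    have hb01 : ∀ n m, 0 ≤ b n m := by
      intro n m; rcases hbin n m with h | h <;> simp [h]
    have key : ∀ n, ∀ m ∈ A n, b n m = 1 → s n = true ∧ s m = false := by
      intro n m hm h1
      constructor
      · simp only [hs, decide_eq_true_eq]
        exact ⟨m, hm, h1⟩
      · simp only [hs, decide_eq_false_iff_not]
        rintro ⟨m'', hm'', h2⟩
        have hn : n ∈ A m := (hsymm n m).mp hm
        have hsum : (1:ℝ) ≤ ∑ m' ∈ A m, b m' m := by
          calc (1:ℝ) = b n m := h1.symm
            _ ≤ ∑ m' ∈ A m, b m' m :=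
              Finset.single_le_sum (fun i _ => hb01 i m) hn
        have hcon' := hcon m m'' hm''
        rw [h2] at hcon'
        have : (1 / ((A m).card : ℝ)) * 1 ≤ (1 / ((A m).card : ℝ)) * ∑ m' ∈ A m, b m' m := by
          apply mul_le_mul_of_nonneg_left hsum
          positivity
        have hpos : 0 < 1 / ((A m).card : ℝ) := by positivity
        nlinarith
    have hle : (∑ n : N, ∑ m ∈ A n, b n m * w n m) ≤ f s := by
      refine Finset.sum_le_sum fun n _ => ?_
      rw [Finset.sum_filter]
      refine Finset.sum_le_sum fun m hm => ?_
      rcases hbin n m with h | h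
      · rw [h, zero_mul]
        split <;> [exact hw n m; rfl]
      · obtain ⟨h1, h2⟩ := key n m hm h
        rw [h, one_mul, if_pos ⟨h1, h2⟩]
    exact hle.trans (hs₀ s)
  · -- f s₀ is an upper bound of the DBSG set
    rintro v ⟨s, rfl⟩
    exact hs₀ s
end
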